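/- Adversary lower bound: Let L be subunitary on 𝒜⊗ℬ and let π⁰,…,π^{T−1} ⪰ 0 on 𝒜⊗ℬ satisfy tr_ℬ(π^{j+1}) = tr_ℬ(L π^j L†) for 0 ≤ j ≤ T−2, together with tr_ℬ(π⁰) = ρ_ξ and tr_ℬ(L π^{T−1} L†) = ρ_τ, where tr(ρ_ξ) = ‖ξ‖² > 0. Then π̄ := Σ_j π^j satisfies tr_ℬ(L π̄ L† − π̄) = ρ_τ − ρ_ξ and tr(π̄)/‖ξ‖² ≤ T. Consequently T ≥ Adv, where Adv is the infimum of tr(σ)/‖ξ‖² over all σ ⪰ 0 with tr_ℬ(L σ L† − σ) = ρ_τ − ρ_ξ. -/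

import Mathlib

open Matrix Kronecker Finset

open scoped ComplexOrder

/-- `L` is subunitary: `‖Lφ‖ ≤ ‖φ‖` for all vectors `φ`. -/
noncomputable def Subunitary {n : Type*} [Fintype n] [DecidableEq n] (L : Matrix n n ℂ) : Prop :=
  ∀ φ : EuclideanSpace ℂ n, ‖Matrix.toEuclideanLin L φ‖ ≤ ‖φ‖

/-- Partial trace over the second factor `B`. -/
noncomputable def ptraceB {A B : Type*} [Fintype B] (M : Matrix (A × B) (A × B) ℂ) :
    Matrix A A ℂ :=
  Matrix.of fun i j => ∑ b : B, M (i, b) (j, b)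

/-- Partial trace over the factors `B` and `C`. -/
noncomputable def ptraceBC {A B C : Type*} [Fintype B] [Fintype C]
    (M : Matrix ((A × B) × C) ((A × B) × C) ℂ) : Matrix A A ℂ :=
  Matrix.of fun i j => ∑ b : B, ∑ c : C, M ((i, b), c) ((j, b), c)

/-- Partial trace over the second factor `C`. -/
noncomputable def ptraceC {H C : Type*} [Fintype C] (M : Matrix (H × C) (H × C) ℂ) :
    Matrix H H ℂ :=
  Matrix.of fun i j => ∑ c : C, M (i, c) (j, c)


lemma ptraceB_sub {A B : Type*} [Fintype B] (X Y : Matrix (A × B) (A × B) ℂ) :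
    ptraceB (X - Y) = ptraceB X - ptraceB Y := by
  ext i j; simp [ptraceB, Finset.sum_sub_distrib]

lemma ptraceB_sum {A B ι : Type*} [Fintype B] (s : Finset ι)
    (f : ι → Matrix (A × B) (A × B) ℂ) :
    ptraceB (∑ i ∈ s, f i) = ∑ i ∈ s, ptraceB (f i) := by
  ext i j
  simp only [ptraceB, Matrix.of_apply, Matrix.sum_apply]
  exact Finset.sum_comm

lemma trace_ptraceB {A B : Type*} [Fintype A] [Fintype B] (M : Matrix (A × B) (A × B) ℂ) :
    (ptraceB M).trace = M.trace := by
  simp [ptraceB, Matrix.trace, Matrix.diag, Fintype.sum_prod_type]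

lemma trace_mul_conjTranspose_re {n m : Type*} [Fintype n] [Fintype m] (M : Matrix n m ℂ) :
    (M * Mᴴ).trace.re = ∑ k : m, ∑ i : n, Complex.normSq (M i k) := by
  simp only [Matrix.trace, Matrix.diag, Matrix.mul_apply, Matrix.conjTranspose_apply,
    Complex.re_sum]
  rw [Finset.sum_comm]
  simp [Complex.normSq_apply]

lemma euclid_norm_sq {n : Type*} [Fintype n] (v : n → ℂ) :
    ‖((WithLp.equiv 2 (n → ℂ)).symm v : EuclideanSpace ℂ n)‖ ^ 2 = ∑ i, Complex.normSq (v i) := by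
  rw [EuclideanSpace.norm_eq, Real.sq_sqrt (by positivity)]
  simp [Complex.sq_norm]

open scoped MatrixOrder in
lemma trace_conj_le {n : Type*} [Fintype n] [DecidableEq n] (L : Matrix n n ℂ)
    (hL : Subunitary L) (σ : Matrix n n ℂ) (hσ : σ.PosSemidef) :
    (L * σ * Lᴴ).trace.re ≤ σ.trace.re := by
  set s := CFC.sqrt σ with hsdef
  have hherm : sᴴ = s := (CFC.sqrt_nonneg σ).posSemidef.1
  have hs : s * s = σ := CFC.sqrt_mul_sqrt_self σ hσ.nonneg
  have h1 : L * σ * Lᴴ = (L * s) * (L * s)ᴴ := by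
    rw [Matrix.conjTranspose_mul, hherm, ← hs]
    simp only [Matrix.mul_assoc]
  have h2 : σ = s * sᴴ := by rw [hherm, hs]
  rw [h1]
  conv_rhs => rw [h2]
  rw [trace_mul_conjTranspose_re, trace_mul_conjTranspose_re]
  apply Finset.sum_le_sum
  intro k _
  have hcol : ∀ i, (L * s) i k = (L *ᵥ fun j => s j k) i := by
    intro i; simp [Matrix.mul_apply, Matrix.mulVec, dotProduct]
  have hnorm := hL ((WithLp.equiv 2 (n → ℂ)).symm fun j => s j k)
  rw [Matrix.toEuclideanLin_apply] at hnorm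
  have hsq := pow_le_pow_left₀ (norm_nonneg _) hnorm 2
  rw [euclid_norm_sq] at hsq
  replace hsq := (euclid_norm_sq _).symm.trans_le hsq
  simp only [Equiv.apply_symm_apply, WithLp.equiv_symm_apply, WithLp.ofLp_toLp] at hsq
  calc ∑ i, Complex.normSq ((L * s) i k) = ∑ i, Complex.normSq ((L *ᵥ fun j => s j k) i) := by
        simp_rw [hcol]
    _ ≤ ∑ i, Complex.normSq (s i k) := hsq

open scoped MatrixOrder in
lemma psd_trace_re_nonneg {n : Type*} [Fintype n] [DecidableEq n] (σ : Matrix n n ℂ)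
    (hσ : σ.PosSemidef) : 0 ≤ σ.trace.re := by
  have h2 : σ = CFC.sqrt σ * (CFC.sqrt σ)ᴴ := by
    rw [(CFC.sqrt_nonneg σ).posSemidef.1, CFC.sqrt_mul_sqrt_self σ hσ.nonneg]
  rw [h2, trace_mul_conjTranspose_re]
  exact Finset.sum_nonneg fun k _ => Finset.sum_nonneg fun i _ => Complex.normSq_nonneg _

/-- Adversary lower bound: a `T`-step feasible sequence converting `ρξ` to `ρτ`
yields a feasible `π̄` with `tr π̄ / c ≤ T`; hence `T` is at least the adversary
bound (the infimum of `tr σ / c` over feasible PSD `σ`). -/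
theorem stmt15 {A B : Type*} [Fintype A] [Fintype B] [DecidableEq A] [DecidableEq B]
    (L : Matrix (A × B) (A × B) ℂ) (hL : Subunitary L)
    (T : ℕ) (hT : 0 < T) (π : ℕ → Matrix (A × B) (A × B) ℂ)
    (hpsd : ∀ j < T, (π j).PosSemidef)
    (hrec : ∀ j, j + 1 < T → ptraceB (π (j + 1)) = ptraceB (L * π j * Lᴴ))
    (ρξ ρτ : Matrix A A ℂ)
    (h0 : ptraceB (π 0) = ρξ)
    (hend : ptraceB (L * π (T - 1) * Lᴴ) = ρτ)
    (c : ℝ) (hc : 0 < c) (htr : ρξ.trace = (c : ℂ)) :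
    ptraceB (L * (∑ j ∈ Finset.range T, π j) * Lᴴ - (∑ j ∈ Finset.range T, π j)) =
        ρτ - ρξ ∧
      (∑ j ∈ Finset.range T, π j).trace.re / c ≤ (T : ℝ) ∧
      sInf {x : ℝ | ∃ σ : Matrix (A × B) (A × B) ℂ, σ.PosSemidef ∧
          ptraceB (L * σ * Lᴴ - σ) = ρτ - ρξ ∧ x = σ.trace.re / c} ≤ (T : ℝ) := by
  -- Part 1
  have hmulsum : L * (∑ j ∈ Finset.range T, π j) * Lᴴ
      = ∑ j ∈ Finset.range T, L * π j * Lᴴ := by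
    rw [Finset.mul_sum, Finset.sum_mul]
  set g : ℕ → Matrix A A ℂ := fun j => if j < T then ptraceB (π j) else ρτ with hg
  have hg1 : ∀ j ∈ Finset.range T, ptraceB (L * π j * Lᴴ) = g (j + 1) := by
    intro j hj
    rw [Finset.mem_range] at hj
    by_cases h : j + 1 < T
    · simp only [hg, if_pos h]
      exact (hrec j h).symm
    · have hjT : j = T - 1 := by omega
      simp only [hg, if_neg h]
      rw [hjT, hend]
  have hg2 : ∀ j ∈ Finset.range T, ptraceB (π j) = g j := by
    intro j hj
    rw [Finset.mem_range] at hj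
    simp only [hg, if_pos hj]
  have part1 : ptraceB (L * (∑ j ∈ Finset.range T, π j) * Lᴴ - (∑ j ∈ Finset.range T, π j)) =
      ρτ - ρξ := by
    rw [ptraceB_sub, hmulsum, ptraceB_sum, ptraceB_sum,
      Finset.sum_congr rfl hg1, Finset.sum_congr rfl hg2, ← Finset.sum_sub_distrib,
      Finset.sum_range_sub]
    simp only [hg, if_neg (lt_irrefl T), if_pos hT, h0]
  -- Part 2
  have claim : ∀ j, j < T → (π j).trace.re ≤ c := by
    intro j
    induction j with
    | zero =>
      intro _
      have : (π 0).trace = (c : ℂ) := by rw [← trace_ptraceB (π 0), h0, htr]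
      rw [this]; simp
    | succ j ih =>
      intro hj
      have hj' : j < T := Nat.lt_of_succ_lt hj
      have : (π (j + 1)).trace = (L * π j * Lᴴ).trace := by
        rw [← trace_ptraceB (π (j + 1)), hrec j hj, trace_ptraceB]
      rw [this]
      exact le_trans (trace_conj_le L hL (π j) (hpsd j hj')) (ih hj')
  have part2 : (∑ j ∈ Finset.range T, π j).trace.re / c ≤ (T : ℝ) := by
    rw [div_le_iff₀ hc, Matrix.trace_sum, Complex.re_sum]
    calc ∑ j ∈ Finset.range T, (π j).trace.re ≤ ∑ _j ∈ Finset.range T, c :=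
          Finset.sum_le_sum fun j hj => claim j (Finset.mem_range.mp hj)
      _ = (T : ℝ) * c := by rw [Finset.sum_const, Finset.card_range, nsmul_eq_mul]
  refine ⟨part1, part2, ?_⟩
  -- Part 3
  have hpsdsum : (∑ j ∈ Finset.range T, π j).PosSemidef := by
    refine Finset.sum_induction π (fun M => M.PosSemidef)
      (fun a b ha hb => ha.add hb) Matrix.PosSemidef.zero fun j hj =>
      hpsd j (Finset.mem_range.mp hj)
  have hmem : (∑ j ∈ Finset.range T, π j).trace.re / c ∈
      {x : ℝ | ∃ σ : Matrix (A × B) (A × B) ℂ, σ.PosSemidef ∧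
        ptraceB (L * σ * Lᴴ - σ) = ρτ - ρξ ∧ x = σ.trace.re / c} :=
    ⟨∑ j ∈ Finset.range T, π j, hpsdsum, part1, rfl⟩
  have hbdd : BddBelow {x : ℝ | ∃ σ : Matrix (A × B) (A × B) ℂ, σ.PosSemidef ∧
      ptraceB (L * σ * Lᴴ - σ) = ρτ - ρξ ∧ x = σ.trace.re / c} := by
    refine ⟨0, fun x hx => ?_⟩
    obtain ⟨σ, hσ, -, rfl⟩ := hx
    exact div_nonneg (psd_trace_re_nonneg σ hσ) hc.le
  exact le_trans (csInf_le hbdd hmem) part2
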